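/- arXiv:2412.18523 — 2 statements merged into one kernel-verified Lean document; each statement's English description precedes it below -/
import Mathlib

section
/- Let W be a one-dimensional standard Brownian motion. For all constants 0 < δ ≤ T < ∞ and θ > 0, the modulus of continuity ω(W_T; δ) = sup{|W(t) − W(s)| : 0 ≤ s ≤ t ≤ T, t − s ≤ δ} satisfies P( ω(W_T; δ) ≥ 4 √(δ (θ² + log(T/δ))) ) ≤ 8 exp(−θ²). -/
open MeasureTheory ProbabilityTheory Set Real
open scoped NNReal ENNReal

lemma gauss_pt (v : ℝ≥0) (hv : v ≠ 0) (c x : ℝ) :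
    gaussianPDFReal 0 v x * rexp (c * x)
      = rexp ((v : ℝ) * c ^ 2 / 2) * gaussianPDFReal (c * v) v x := by
  have hv' : (v : ℝ) ≠ 0 := by exact_mod_cast hv
  unfold gaussianPDFReal
  rw [mul_assoc, ← Real.exp_add]
  rw [show rexp ((v:ℝ) * c ^ 2 / 2) * ((√(2 * π * (v:ℝ)))⁻¹ * rexp (-(x - c * (v:ℝ)) ^ 2 / (2 * (v:ℝ))))
      = (√(2 * π * (v:ℝ)))⁻¹ * rexp ((v:ℝ) * c ^ 2 / 2 + -(x - c * (v:ℝ)) ^ 2 / (2 * (v:ℝ))) by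
    rw [Real.exp_add]; ring]
  congr 1
  field_simp
  ring

lemma gauss_smul_eq (v : ℝ≥0) (hv : v ≠ 0) (c : ℝ) :
    (fun x => (gaussianPDFReal 0 v x).toNNReal • rexp (c * x))
      = fun x => rexp ((v : ℝ) * c ^ 2 / 2) * gaussianPDFReal (c * v) v x := by
  funext x
  rw [NNReal.smul_def, smul_eq_mul, Real.coe_toNNReal _ (gaussianPDFReal_nonneg 0 v x)]
  exact gauss_pt v hv c x

lemma gaussianReal_eq_withDensity (v : ℝ≥0) (hv : v ≠ 0) :
    gaussianReal 0 v = volume.withDensity fun x => ((gaussianPDFReal 0 v x).toNNReal : ℝ≥0∞) :=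
  gaussianReal_of_var_ne_zero _ hv

lemma integrable_exp_gaussianReal (v : ℝ≥0) (c : ℝ) :
    Integrable (fun x => rexp (c * x)) (gaussianReal 0 v) := by
  by_cases hv : v = 0
  · rw [hv, gaussianReal_zero_var]
    refine (integrable_const (rexp (c * 0))).congr ?_
    rw [Filter.EventuallyEq, ae_dirac_eq]
    simp
  rw [gaussianReal_eq_withDensity v hv,
    integrable_withDensity_iff_integrable_smul ((measurable_gaussianPDFReal 0 v).real_toNNReal),
    gauss_smul_eq v hv c]
  exact (integrable_gaussianPDFReal _ _).const_mul _

lemma integral_exp_gaussianReal (v : ℝ≥0) (c : ℝ) :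
    ∫ x, rexp (c * x) ∂(gaussianReal 0 v) = rexp ((v : ℝ) * c ^ 2 / 2) := by
  by_cases hv : v = 0
  · rw [hv, gaussianReal_zero_var, integral_dirac]
    simp
  rw [gaussianReal_eq_withDensity v hv,
    integral_withDensity_eq_integral_smul ((measurable_gaussianPDFReal 0 v).real_toNNReal),
    gauss_smul_eq v hv c, integral_const_mul, integral_gaussianPDFReal_eq_one _ hv, mul_one]


lemma exp_increment {Ω : Type*} [MeasurableSpace Ω] (P : Measure Ω) (W : ℝ → Ω → ℝ)
    (hmeas : ∀ t, Measurable (W t))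
    (hlaw : ∀ s t : ℝ, 0 ≤ s → s ≤ t →
      P.map (fun ω => W t ω - W s ω) = gaussianReal 0 (Real.toNNReal (t - s)))
    {s t : ℝ} (hs : 0 ≤ s) (hst : s ≤ t) (c : ℝ) :
    Integrable (fun ω => rexp (c * (W t ω - W s ω))) P ∧
      ∫ ω, rexp (c * (W t ω - W s ω)) ∂P = rexp ((t - s) * c ^ 2 / 2) := by
  have hX : Measurable fun ω => W t ω - W s ω := (hmeas t).sub (hmeas s)
  have hg : AEStronglyMeasurable (fun x => rexp (c * x))
      (P.map fun ω => W t ω - W s ω) :=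
    (Real.continuous_exp.comp (continuous_const.mul continuous_id)).aestronglyMeasurable
  constructor
  · have h := integrable_exp_gaussianReal (Real.toNNReal (t - s)) c
    rw [← hlaw s t hs hst] at h
    exact (integrable_map_measure hg hX.aemeasurable).mp h
  · have h := integral_map hX.aemeasurable hg
    rw [← h, hlaw s t hs hst, integral_exp_gaussianReal,
      Real.coe_toNNReal _ (sub_nonneg.2 hst)]


lemma indep_indicator {Ω : Type*} [MeasurableSpace Ω] (P : Measure Ω) (W : ℝ → Ω → ℝ)
    (hindep : ∀ (m : ℕ) (u : ℕ → ℝ), Monotone u → 0 ≤ u 0 →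
      iIndepFun
        (fun (k : Fin m) ω => W (u (k + 1)) ω - W (u k) ω) P)
    (hWmeas : ∀ t, Measurable (W t))
    (m k : ℕ) (u : ℕ → ℝ) (hu : Monotone u) (h0 : 0 ≤ u 0) (hkm : k < m) (a ε : ℝ) :
    IndepFun
      (({ω' : Ω | (∀ j, j < k → ε * (W (u j) ω' - W (u 0) ω') < a) ∧
          a ≤ ε * (W (u k) ω' - W (u 0) ω')}).indicator (fun _ => (1 : ℝ)))
      (fun ω => W (u m) ω - W (u k) ω) P := by
  classical
  set Y : Fin m → Ω → ℝ := fun i ω => W (u (i + 1)) ω - W (u i) ω with hY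
  have hYmeas : ∀ i, Measurable (Y i) := fun i => (hWmeas _).sub (hWmeas _)
  set SFin : Finset (Fin m) := Finset.univ.filter (fun i : Fin m => (i : ℕ) < k) with hSF
  set TFin : Finset (Fin m) := Finset.univ.filter (fun i : Fin m => k ≤ (i : ℕ)) with hTF
  have hdisj : Disjoint SFin TFin := by
    rw [Finset.disjoint_left]
    intro i hi hi'
    simp [hSF, hTF] at hi hi'
    omega
  have base := (hindep m u hu h0).indepFun_finset SFin TFin hdisj hYmeas
  -- partial sums as functions of restricted coordinates
  set SS : ℕ → (↥SFin → ℝ) → ℝ :=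
    fun j g => ∑ i : ↥SFin, if ((i : Fin m) : ℕ) < j then g i else 0 with hSS
  set C : Set (↥SFin → ℝ) :=
    {g | (∀ j, j < k → ε * SS j g < a) ∧ a ≤ ε * SS k g} with hC
  set φ : (↥SFin → ℝ) → ℝ := C.indicator (fun _ => (1 : ℝ)) with hφdef
  set ψ : (↥TFin → ℝ) → ℝ := fun g => ∑ i : ↥TFin, g i with hψdef
  have hSSmeas : ∀ j, Measurable (SS j) := by
    intro j
    apply Finset.measurable_sum
    intro i _
    by_cases h : ((i : Fin m) : ℕ) < j
    · simpa [h] using measurable_pi_apply i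
    · simpa [h] using measurable_const
  have hCmeas : MeasurableSet C := by
    have : C = (⋂ j, ⋂ _ : j < k, {g | ε * SS j g < a}) ∩ {g | a ≤ ε * SS k g} := by
      ext g; simp [hC, Set.mem_iInter]
    rw [this]
    exact (MeasurableSet.iInter fun j => MeasurableSet.iInter fun _ =>
        measurableSet_lt (measurable_const.mul (hSSmeas j)) measurable_const).inter
      (measurableSet_le measurable_const (measurable_const.mul (hSSmeas k)))
  have hφ : Measurable φ := measurable_const.indicator hCmeas
  have hψ : Measurable ψ := Finset.measurable_sum _ (fun i _ => measurable_pi_apply i)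
  have hcomp := base.comp hφ hψ
  -- identify the two compositions
  have filter_range : ∀ (j : ℕ), j ≤ m →
      (Finset.range m).filter (fun i => i < j) = Finset.range j := by
    intro j hj; ext i; simp [Finset.mem_filter, Finset.mem_range]; omega
  have filter_range' : (Finset.range m).filter (fun i => k ≤ i) = Finset.Ico k m := by
    ext i; simp [Finset.mem_filter, Finset.mem_range, Finset.mem_Ico]; omega
  have hSsum : ∀ (ω : Ω) (j : ℕ), j ≤ k →
      SS j (fun i : ↥SFin => Y i ω) = W (u j) ω - W (u 0) ω := by
    intro ω j hj
    have e1 : SS j (fun i : ↥SFin => Y i ω)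
        = ∑ i ∈ SFin, (if ((i : Fin m) : ℕ) < j then Y i ω else 0) := by
      rw [hSS]
      exact Finset.sum_coe_sort SFin (fun i : Fin m => if (i : ℕ) < j then Y i ω else 0)
    rw [e1, hSF, Finset.sum_filter]
    have e2 : ∑ i : Fin m, (if ((i : Fin m) : ℕ) < k then
        (if ((i : Fin m) : ℕ) < j then Y i ω else 0) else 0)
        = ∑ i ∈ Finset.range m, (if i < j then (W (u (i + 1)) ω - W (u i) ω) else 0) := by
      rw [← Fin.sum_univ_eq_sum_range (fun i => if i < j then (W (u (i + 1)) ω - W (u i) ω) else 0) m]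
      apply Finset.sum_congr rfl
      intro i _
      by_cases h1 : (i : ℕ) < j
      · have h2 : (i : ℕ) < k := lt_of_lt_of_le h1 hj
        simp [h1, h2, hY]
      · by_cases h2 : (i : ℕ) < k <;> simp [h1, h2]
    rw [e2, ← Finset.sum_filter, filter_range j (le_trans hj hkm.le),
      Finset.sum_range_sub (fun i => W (u i) ω) j]
  have heq1 : φ ∘ (fun ω (i : ↥SFin) => Y i ω)
      = ({ω' : Ω | (∀ j, j < k → ε * (W (u j) ω' - W (u 0) ω') < a) ∧
          a ≤ ε * (W (u k) ω' - W (u 0) ω')}).indicator (fun _ => (1 : ℝ)) := by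
    funext ω
    have hmem : ((fun i : ↥SFin => Y i ω) ∈ C) ↔
        ((∀ j, j < k → ε * (W (u j) ω - W (u 0) ω) < a) ∧
          a ≤ ε * (W (u k) ω - W (u 0) ω)) := by
      rw [hC, Set.mem_setOf_eq, hSsum ω k le_rfl]
      constructor
      · rintro ⟨h1, h2⟩
        exact ⟨fun j hj => by rw [← hSsum ω j hj.le]; exact h1 j hj, h2⟩
      · rintro ⟨h1, h2⟩
        exact ⟨fun j hj => by rw [hSsum ω j hj.le]; exact h1 j hj, h2⟩
    by_cases hω : ω ∈ {ω' : Ω | (∀ j, j < k → ε * (W (u j) ω' - W (u 0) ω') < a) ∧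
        a ≤ ε * (W (u k) ω' - W (u 0) ω')}
    · simp only [Function.comp_apply, hφdef]
      rw [Set.indicator_of_mem (hmem.mpr hω), Set.indicator_of_mem hω]
    · simp only [Function.comp_apply, hφdef]
      rw [Set.indicator_of_notMem (fun hc => hω (hmem.mp hc)),
        Set.indicator_of_notMem hω]
  have heq2 : ψ ∘ (fun ω (i : ↥TFin) => Y i ω) = fun ω => W (u m) ω - W (u k) ω := by
    funext ω
    simp only [Function.comp_apply, hψdef]
    have e1 : (∑ i : ↥TFin, Y (↑i) ω) = ∑ i ∈ TFin, Y i ω :=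
      Finset.sum_coe_sort TFin (fun i : Fin m => Y i ω)
    rw [e1, hTF, Finset.sum_filter]
    have e2 : ∑ i : Fin m, (if k ≤ (i : ℕ) then Y i ω else 0)
        = ∑ i ∈ Finset.range m, (if k ≤ i then (W (u (i + 1)) ω - W (u i) ω) else 0) := by
      rw [← Fin.sum_univ_eq_sum_range (fun i => if k ≤ i then (W (u (i + 1)) ω - W (u i) ω) else 0) m]
      try (apply Finset.sum_congr rfl
           intro i _
           by_cases h1 : k ≤ (i : ℕ) <;> simp [h1, hY])
    rw [e2, ← Finset.sum_filter, filter_range',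
      Finset.sum_Ico_eq_sub (fun i => W (u (i + 1)) ω - W (u i) ω) hkm.le,
      Finset.sum_range_sub (fun i => W (u i) ω) m,
      Finset.sum_range_sub (fun i => W (u i) ω) k]
    try ring
  rwa [heq1, heq2] at hcomp


lemma finite_max {Ω : Type*} [MeasurableSpace Ω] (P : Measure Ω) [IsProbabilityMeasure P]
    (W : ℝ → Ω → ℝ)
    (hWmeas : ∀ t, Measurable (W t))
    (hlaw : ∀ s t : ℝ, 0 ≤ s → s ≤ t →
      P.map (fun ω => W t ω - W s ω) = gaussianReal 0 (Real.toNNReal (t - s)))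
    (hindep : ∀ (m : ℕ) (u : ℕ → ℝ), Monotone u → 0 ≤ u 0 →
      iIndepFun
        (fun (k : Fin m) ω => W (u (k + 1)) ω - W (u k) ω) P)
    (m : ℕ) (u : ℕ → ℝ) (hu : Monotone u) (h0 : 0 ≤ u 0)
    (L a : ℝ) (hL : 0 < L) (ha : 0 < a) (hum : u m - u 0 ≤ L)
    (ε : ℝ) (hε : ε = 1 ∨ ε = -1) :
    P {ω | ∃ k ≤ m, a ≤ ε * (W (u k) ω - W (u 0) ω)}
      ≤ ENNReal.ofReal (rexp (-(a ^ 2) / (2 * L))) := by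
  classical
  have hε2 : ε * ε = 1 := by rcases hε with h | h <;> rw [h] <;> norm_num
  set c : ℝ := ε * (a / L) with hc
  have hc2 : c ^ 2 = (a / L) ^ 2 := by
    rw [hc]; rw [mul_pow]; rcases hε with h | h <;> rw [h] <;> norm_num
  set A : ℕ → Set Ω := fun k =>
    {ω' : Ω | (∀ j, j < k → ε * (W (u j) ω' - W (u 0) ω') < a) ∧
      a ≤ ε * (W (u k) ω' - W (u 0) ω')} with hA
  have hSmeas : ∀ k : ℕ, Measurable (fun ω => W (u k) ω - W (u 0) ω) :=
    fun k => (hWmeas _).sub (hWmeas _)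
  have hAmeas : ∀ k, MeasurableSet (A k) := by
    intro k
    have : A k = (⋂ j, ⋂ _ : j < k, {ω | ε * (W (u j) ω - W (u 0) ω) < a}) ∩
        {ω | a ≤ ε * (W (u k) ω - W (u 0) ω)} := by
      ext ω; simp [hA, Set.mem_iInter]
    rw [this]
    exact (MeasurableSet.iInter fun j => MeasurableSet.iInter fun _ =>
        measurableSet_lt (measurable_const.mul (hSmeas j)) measurable_const).inter
      (measurableSet_le measurable_const (measurable_const.mul (hSmeas k)))
  -- the exponential of the full increment
  set f : Ω → ℝ := fun ω => rexp (c * (W (u m) ω - W (u 0) ω)) with hf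
  have hfint : Integrable f P :=
    (exp_increment P W hWmeas hlaw h0 (hu (Nat.zero_le m)) c).1
  have hfval : ∫ ω, f ω ∂P = rexp ((u m - u 0) * c ^ 2 / 2) :=
    (exp_increment P W hWmeas hlaw h0 (hu (Nat.zero_le m)) c).2
  have hfnonneg : 0 ≤ᶠ[ae P] f := Filter.Eventually.of_forall fun ω => (Real.exp_pos _).le
  -- the key per-index estimate
  have key : ∀ k, k ≤ m →
      rexp (a / L * a) * (P (A k)).toReal ≤ ∫ ω, (A k).indicator f ω ∂P := by
    intro k hk
    have hindint : Integrable ((A k).indicator f) P := hfint.indicator (hAmeas k)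
    rcases eq_or_lt_of_le hk with hkm | hkm
    · -- k = m : pointwise bound suffices
      subst hkm
      have hpt : ∀ ω, (A k).indicator (fun _ => rexp (a / L * a)) ω ≤ (A k).indicator f ω := by
        intro ω
        by_cases hω : ω ∈ A k
        · rw [Set.indicator_of_mem hω, Set.indicator_of_mem hω]
          apply Real.exp_le_exp.2
          have h1 : a / L * a ≤ a / L * (ε * (W (u k) ω - W (u 0) ω)) :=
            mul_le_mul_of_nonneg_left hω.2 (by positivity)
          calc a / L * a ≤ a / L * (ε * (W (u k) ω - W (u 0) ω)) := h1
            _ = c * (W (u k) ω - W (u 0) ω) := by rw [hc]; ring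
        · rw [Set.indicator_of_notMem hω, Set.indicator_of_notMem hω]
      have hconst : (A k).indicator (fun _ => rexp (a / L * a))
          = fun ω => rexp (a / L * a) * (A k).indicator (fun _ => (1 : ℝ)) ω := by
        funext ω
        by_cases hω : ω ∈ A k
        · rw [Set.indicator_of_mem hω, Set.indicator_of_mem hω]; ring
        · rw [Set.indicator_of_notMem hω, Set.indicator_of_notMem hω]; ring
      calc rexp (a / L * a) * (P (A k)).toReal
          = ∫ ω, (A k).indicator (fun _ => rexp (a / L * a)) ω ∂P := by
            rw [hconst, integral_const_mul,
              show ((A k).indicator (fun _ => (1 : ℝ))) = (A k).indicator (1 : Ω → ℝ) from rfl,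
              integral_indicator_one (hAmeas k), measureReal_def]
        _ ≤ ∫ ω, (A k).indicator f ω ∂P := by
            apply integral_mono _ hindint hpt
            exact (integrable_const _).indicator (hAmeas k)
    · -- k < m : use independence
      set D : Ω → ℝ := fun ω => W (u m) ω - W (u k) ω with hD
      have hks : 0 ≤ u k := le_trans h0 (hu (Nat.zero_le k))
      have hDint : Integrable (fun ω => rexp (c * D ω)) P :=
        (exp_increment P W hWmeas hlaw hks (hu hkm.le) c).1
      have hDval : ∫ ω, rexp (c * D ω) ∂P = rexp ((u m - u k) * c ^ 2 / 2) :=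
        (exp_increment P W hWmeas hlaw hks (hu hkm.le) c).2
      have hIone : IndepFun ((A k).indicator (fun _ => (1 : ℝ))) (fun ω => rexp (c * D ω)) P := by
        have h := indep_indicator P W hindep hWmeas m k u hu h0 hkm a ε
        have h2 := h.comp (measurable_id (α := ℝ)) (Real.measurable_exp.comp (measurable_id.const_mul c))
        exact h2
      have hprod := hIone.integral_mul_eq_mul_integral
        ((measurable_const.indicator (hAmeas k)).aestronglyMeasurable)
        ((Real.measurable_exp.comp (measurable_id.const_mul c)).comp
          ((hWmeas _).sub (hWmeas _))).aestronglyMeasurable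
      -- pointwise: indicator * exp(c D) * e^{λa} ≤ indicator f
      have hpt : ∀ ω, rexp (a / L * a) * ((A k).indicator (fun _ => (1 : ℝ)) ω * rexp (c * D ω))
          ≤ (A k).indicator f ω := by
        intro ω
        by_cases hω : ω ∈ A k
        · rw [Set.indicator_of_mem hω, Set.indicator_of_mem hω, one_mul, hf]
          show rexp (a / L * a) * rexp (c * D ω) ≤ rexp (c * (W (u m) ω - W (u 0) ω))
          have hsplit : c * (W (u m) ω - W (u 0) ω)
              = c * (W (u k) ω - W (u 0) ω) + c * D ω := by rw [hD]; ring
          rw [hsplit, Real.exp_add]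
          apply mul_le_mul_of_nonneg_right _ (Real.exp_pos _).le
          apply Real.exp_le_exp.2
          calc a / L * a ≤ a / L * (ε * (W (u k) ω - W (u 0) ω)) :=
              mul_le_mul_of_nonneg_left hω.2 (by positivity)
            _ = c * (W (u k) ω - W (u 0) ω) := by rw [hc]; ring
        · rw [Set.indicator_of_notMem hω, Set.indicator_of_notMem hω]
          simp
      have hlhs_int : Integrable
          (fun ω => rexp (a / L * a) * ((A k).indicator (fun _ => (1 : ℝ)) ω * rexp (c * D ω))) P := by
        have : (fun ω => rexp (a / L * a) * ((A k).indicator (fun _ => (1 : ℝ)) ω * rexp (c * D ω)))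
            = (A k).indicator (fun ω => rexp (a / L * a) * rexp (c * D ω)) := by
          funext ω
          by_cases hω : ω ∈ A k
          · rw [Set.indicator_of_mem hω, Set.indicator_of_mem hω]; ring
          · rw [Set.indicator_of_notMem hω, Set.indicator_of_notMem hω]; ring
        rw [this]
        exact (hDint.const_mul _).indicator (hAmeas k)
      have hLeft : ∫ ω, rexp (a / L * a) * ((A k).indicator (fun _ => (1 : ℝ)) ω * rexp (c * D ω)) ∂P
          = rexp (a / L * a) * ((P (A k)).toReal * rexp ((u m - u k) * c ^ 2 / 2)) := by
        rw [integral_const_mul]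
        congr 1
        have : (fun ω => (A k).indicator (fun _ => (1 : ℝ)) ω * rexp (c * D ω))
            = ((A k).indicator (fun _ => (1 : ℝ))) * (fun ω => rexp (c * D ω)) := rfl
        rw [this, hprod, hDval]
        congr 1
        have h1 : (A k).indicator (fun _ => (1 : ℝ)) = (A k).indicator (1 : Ω → ℝ) := rfl
        rw [h1, integral_indicator_one (hAmeas k), measureReal_def]
      have step : rexp (a / L * a) * ((P (A k)).toReal * rexp ((u m - u k) * c ^ 2 / 2))
          ≤ ∫ ω, (A k).indicator f ω ∂P := by
        rw [← hLeft]
        exact integral_mono hlhs_int hindint hpt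
      have hone : (1 : ℝ) ≤ rexp ((u m - u k) * c ^ 2 / 2) := by
        rw [show (1 : ℝ) = rexp 0 by simp]
        apply Real.exp_le_exp.2
        have : 0 ≤ u m - u k := sub_nonneg.2 (hu hkm.le)
        positivity
      calc rexp (a / L * a) * (P (A k)).toReal
          ≤ rexp (a / L * a) * ((P (A k)).toReal * rexp ((u m - u k) * c ^ 2 / 2)) := by
            apply mul_le_mul_of_nonneg_left _ (Real.exp_pos _).le
            nth_rewrite 1 [← mul_one (P (A k)).toReal]
            exact mul_le_mul_of_nonneg_left hone ENNReal.toReal_nonneg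
        _ ≤ ∫ ω, (A k).indicator f ω ∂P := step
  -- disjointness
  have hdisj2 : ∀ k k', k < k' → Disjoint (A k) (A k') := by
    intro k k' hkk'
    rw [Set.disjoint_left]
    intro ω h1 h2
    exact absurd h1.2 (not_le.2 (h2.1 k hkk'))
  have hdisj : (↑(Finset.range (m + 1)) : Set ℕ).Pairwise (Function.onFun Disjoint A) :=
    fun k _ k' _ hkk' => hkk'.lt_or_gt.elim (fun h => hdisj2 _ _ h) (fun h => (hdisj2 _ _ h).symm)
  -- event inclusion
  have hincl : {ω | ∃ k ≤ m, a ≤ ε * (W (u k) ω - W (u 0) ω)}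
      ⊆ ⋃ k ∈ Finset.range (m + 1), A k := by
    intro ω hω
    obtain ⟨k, hk, hak⟩ := hω
    have hex : ∃ n, a ≤ ε * (W (u n) ω - W (u 0) ω) := ⟨k, hak⟩
    have hfind := Nat.find_spec hex
    have hfle : Nat.find hex ≤ k := Nat.find_min' hex hak
    exact Set.mem_biUnion (Finset.mem_range.2 (Nat.lt_succ_of_le (le_trans hfle hk)))
      (show ω ∈ A (Nat.find hex) from
        ⟨fun j hj => lt_of_not_ge (Nat.find_min hex hj), hfind⟩)
  -- sum bound via the integral
  have hsum_le : ∑ k ∈ Finset.range (m + 1), (P (A k)).toReal ≤ rexp (-(a ^ 2) / (2 * L)) := by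
    have hstep : rexp (a / L * a) * ∑ k ∈ Finset.range (m + 1), (P (A k)).toReal
        ≤ rexp (a ^ 2 / (2 * L)) := by
      rw [Finset.mul_sum]
      calc ∑ k ∈ Finset.range (m + 1), rexp (a / L * a) * (P (A k)).toReal
          ≤ ∑ k ∈ Finset.range (m + 1), ∫ ω, (A k).indicator f ω ∂P :=
            Finset.sum_le_sum fun k hk => key k (Nat.lt_succ_iff.1 (Finset.mem_range.1 hk))
        _ = ∑ k ∈ Finset.range (m + 1), ∫ ω in A k, f ω ∂P := by
            refine Finset.sum_congr rfl fun k _ => ?_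
            rw [integral_indicator (hAmeas k)]
        _ = ∫ ω in ⋃ k ∈ Finset.range (m + 1), A k, f ω ∂P := by
            rw [integral_biUnion_finset _ (fun k _ => hAmeas k) hdisj
              (fun k _ => hfint.integrableOn)]
        _ ≤ ∫ ω, f ω ∂P := setIntegral_le_integral hfint hfnonneg
        _ = rexp ((u m - u 0) * c ^ 2 / 2) := hfval
        _ ≤ rexp (a ^ 2 / (2 * L)) := by
            apply Real.exp_le_exp.2
            rw [hc2]
            have h1 : (u m - u 0) * (a / L) ^ 2 ≤ L * (a / L) ^ 2 :=
              mul_le_mul_of_nonneg_right hum (sq_nonneg (a / L))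
            have h2 : L * (a / L) ^ 2 / 2 = a ^ 2 / (2 * L) := by
              field_simp
            linarith
    have h2 : ∑ k ∈ Finset.range (m + 1), (P (A k)).toReal
        ≤ rexp (a ^ 2 / (2 * L)) / rexp (a / L * a) := by
      rw [le_div_iff₀ (Real.exp_pos _)]
      calc (∑ k ∈ Finset.range (m + 1), (P (A k)).toReal) * rexp (a / L * a)
          = rexp (a / L * a) * ∑ k ∈ Finset.range (m + 1), (P (A k)).toReal := by ring
        _ ≤ rexp (a ^ 2 / (2 * L)) := hstep
    have hexp_eq : a ^ 2 / (2 * L) - a / L * a = -(a ^ 2) / (2 * L) := by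
      field_simp; ring
    calc ∑ k ∈ Finset.range (m + 1), (P (A k)).toReal
        ≤ rexp (a ^ 2 / (2 * L)) / rexp (a / L * a) := h2
      _ = rexp (a ^ 2 / (2 * L) - a / L * a) := (Real.exp_sub _ _).symm
      _ = rexp (-(a ^ 2) / (2 * L)) := by rw [hexp_eq]
  -- wrap up in ENNReal
  calc P {ω | ∃ k ≤ m, a ≤ ε * (W (u k) ω - W (u 0) ω)}
      ≤ P (⋃ k ∈ Finset.range (m + 1), A k) := measure_mono hincl
    _ ≤ ∑ k ∈ Finset.range (m + 1), P (A k) := measure_biUnion_finset_le _ _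
    _ = ENNReal.ofReal (∑ k ∈ Finset.range (m + 1), (P (A k)).toReal) := by
        rw [ENNReal.ofReal_sum_of_nonneg (fun _ _ => ENNReal.toReal_nonneg)]
        exact Finset.sum_congr rfl fun k hk => (ENNReal.ofReal_toReal (measure_ne_top P _)).symm
    _ ≤ ENNReal.ofReal (rexp (-(a ^ 2) / (2 * L))) := ENNReal.ofReal_le_ofReal hsum_le


lemma window_bound {Ω : Type*} [MeasurableSpace Ω] (P : Measure Ω) [IsProbabilityMeasure P]
    (W : ℝ → Ω → ℝ)
    (hWmeas : ∀ t, Measurable (W t))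
    (hlaw : ∀ s t : ℝ, 0 ≤ s → s ≤ t →
      P.map (fun ω => W t ω - W s ω) = gaussianReal 0 (Real.toNNReal (t - s)))
    (hindep : ∀ (m : ℕ) (u : ℕ → ℝ), Monotone u → 0 ≤ u 0 →
      iIndepFun
        (fun (k : Fin m) ω => W (u (k + 1)) ω - W (u k) ω) P)
    (c δ a : ℝ) (hc0 : 0 ≤ c) (hδ : 0 < δ) (ha : 0 < a)
    (ε : ℝ) (hε : ε = 1 ∨ ε = -1) :
    P {ω | ∃ q : ℚ, c ≤ (q : ℝ) ∧ (q : ℝ) ≤ c + 2 * δ ∧ a < ε * (W q ω - W c ω)}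
      ≤ ENNReal.ofReal (rexp (-(a ^ 2) / (2 * (2 * δ)))) := by
  classical
  set e : ℕ → ℚ := fun n => (Denumerable.eqv ℚ).symm n with he
  set G : ℕ → Set Ω := fun n =>
    {ω | ∃ j, j < n ∧ c ≤ ((e j : ℚ) : ℝ) ∧ ((e j : ℚ) : ℝ) ≤ c + 2 * δ ∧
      a ≤ ε * (W (e j) ω - W c ω)} with hG
  have hmono : Monotone G := by
    intro p q hpq ω hω
    obtain ⟨j, hj, h1, h2, h3⟩ := hω
    exact ⟨j, lt_of_lt_of_le hj hpq, h1, h2, h3⟩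
  have hsub : {ω : Ω | ∃ q : ℚ, c ≤ (q : ℝ) ∧ (q : ℝ) ≤ c + 2 * δ ∧ a < ε * (W q ω - W c ω)}
      ⊆ ⋃ n, G n := by
    intro ω hω
    obtain ⟨q, h1, h2, h3⟩ := hω
    refine Set.mem_iUnion.2 ⟨(Denumerable.eqv ℚ) q + 1, (Denumerable.eqv ℚ) q, Nat.lt_succ_self _, ?_⟩
    rw [he]
    simp only [Equiv.symm_apply_apply]
    exact ⟨h1, h2, h3.le⟩
  have hGbound : ∀ n, P (G n) ≤ ENNReal.ofReal (rexp (-(a ^ 2) / (2 * (2 * δ)))) := by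
    intro n
    set F : Finset ℝ := insert c (((Finset.range n).filter
      (fun j => c ≤ ((e j : ℚ) : ℝ) ∧ ((e j : ℚ) : ℝ) ≤ c + 2 * δ)).image
        (fun j => ((e j : ℚ) : ℝ))) with hF
    have hFmem : ∀ x ∈ F, c ≤ x ∧ x ≤ c + 2 * δ := by
      intro x hx
      rcases Finset.mem_insert.1 hx with h | h
      · subst h; exact ⟨le_rfl, by linarith⟩
      · obtain ⟨j, hj, rfl⟩ := Finset.mem_image.1 h
        exact (Finset.mem_filter.1 hj).2
    set l : List ℝ := Finset.sort F (· ≤ ·) with hl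
    have hsorted : List.Pairwise (· ≤ ·) l := Finset.pairwise_sort _ _
    have hmem_l : ∀ x : ℝ, x ∈ l ↔ x ∈ F := fun x => Finset.mem_sort _
    have hlen : 0 < l.length := by
      rw [hl, Finset.length_sort]
      exact Finset.card_pos.2 ⟨c, Finset.mem_insert_self _ _⟩
    set u : ℕ → ℝ := fun k => if h : k < l.length then l.get ⟨k, h⟩ else c + 2 * δ with hudef
    have hget_mem : ∀ (k : ℕ) (h : k < l.length), l.get ⟨k, h⟩ ∈ F :=
      fun k h => (hmem_l _).1 (l.get_mem ⟨k, h⟩)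
    have hu : Monotone u := by
      intro p q hpq
      simp only [hudef]
      by_cases hq : q < l.length
      · have hp : p < l.length := lt_of_le_of_lt hpq hq
        rw [dif_pos hp, dif_pos hq]
        rcases eq_or_lt_of_le hpq with rfl | hlt
        · exact le_rfl
        · exact hsorted.rel_get_of_lt (Fin.mk_lt_mk.2 hlt)
      · rw [dif_neg hq]
        by_cases hp : p < l.length
        · rw [dif_pos hp]
          exact (hFmem _ (hget_mem p hp)).2
        · rw [dif_neg hp]
    have hu0 : u 0 = c := by
      have hcl : c ∈ l := (hmem_l c).2 (Finset.mem_insert_self _ _)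
      obtain ⟨idx, hidx⟩ := List.mem_iff_get.1 hcl
      simp only [hudef]
      rw [dif_pos hlen]
      refine le_antisymm ?_ (hFmem _ (hget_mem 0 hlen)).1
      rcases Nat.eq_or_lt_of_le (Nat.zero_le idx.val) with h | h
      · have hidx0 : idx = ⟨0, hlen⟩ := Fin.ext h.symm
        rw [← hidx, hidx0]
      · rw [← hidx]
        exact hsorted.rel_get_of_lt (by simpa [Fin.lt_def] using h)
    have humle : u l.length - u 0 ≤ 2 * δ := by
      rw [hu0]
      simp only [hudef]
      rw [dif_neg (lt_irrefl _)]
      linarith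
    have h00 : 0 ≤ u 0 := by rw [hu0]; exact hc0
    have hGsub : G n ⊆ {ω | ∃ k ≤ l.length, a ≤ ε * (W (u k) ω - W (u 0) ω)} := by
      intro ω hω
      obtain ⟨j, hjn, h1, h2, h3⟩ := hω
      have hxF : ((e j : ℚ) : ℝ) ∈ F := by
        rw [hF]
        refine Finset.mem_insert_of_mem (Finset.mem_image.2 ⟨j, ?_, rfl⟩)
        exact Finset.mem_filter.2 ⟨Finset.mem_range.2 hjn, h1, h2⟩
      obtain ⟨idx, hidx⟩ := List.mem_iff_get.1 ((hmem_l _).2 hxF)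
      refine ⟨idx.val, le_of_lt idx.isLt, ?_⟩
      have : u idx.val = ((e j : ℚ) : ℝ) := by
        simp only [hudef]
        rw [dif_pos idx.isLt, ← hidx]
      rw [this, hu0]
      exact h3
    calc P (G n) ≤ P {ω | ∃ k ≤ l.length, a ≤ ε * (W (u k) ω - W (u 0) ω)} :=
          measure_mono hGsub
      _ ≤ ENNReal.ofReal (rexp (-(a ^ 2) / (2 * (2 * δ)))) :=
          finite_max P W hWmeas hlaw hindep l.length u hu h00 (2 * δ) a
            (by linarith) ha humle ε hε
  calc P {ω : Ω | ∃ q : ℚ, c ≤ (q : ℝ) ∧ (q : ℝ) ≤ c + 2 * δ ∧ a < ε * (W q ω - W c ω)}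
      ≤ P (⋃ n, G n) := measure_mono hsub
    _ = ⨆ n, P (G n) := hmono.measure_iUnion
    _ ≤ ENNReal.ofReal (rexp (-(a ^ 2) / (2 * (2 * δ)))) := iSup_le hGbound


/-- A one-dimensional standard Brownian motion: continuous paths started at `0`, with
independent Gaussian increments `W t - W s ∼ N(0, t - s)`. -/
def IsBrownianMotion {Ω : Type*} [MeasurableSpace Ω] (P : Measure Ω)
    (W : ℝ → Ω → ℝ) : Prop :=
  (∀ ω, Continuous fun t => W t ω) ∧ (∀ ω, W 0 ω = 0) ∧ (∀ t, Measurable (W t)) ∧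
  (∀ s t : ℝ, 0 ≤ s → s ≤ t →
    P.map (fun ω => W t ω - W s ω) = gaussianReal 0 (Real.toNNReal (t - s))) ∧
  (∀ (m : ℕ) (u : ℕ → ℝ), Monotone u → 0 ≤ u 0 →
    iIndepFun
      (fun (k : Fin m) ω => W (u (k + 1)) ω - W (u k) ω) P)

/-- Modulus of continuity of the path `x` stopped at time `t`, at scale `δ`. -/
noncomputable def modulus (x : ℝ → ℝ) (t δ : ℝ) : ℝ :=
  sSup {d : ℝ | ∃ r s : ℝ, 0 ≤ r ∧ r ≤ s ∧ s ≤ t ∧ s - r ≤ δ ∧ d = |x s - x r|}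

/-- Tail bound for the modulus of continuity of Brownian motion: for `0 < δ ≤ T` and `θ > 0`,
`P(ω(W_T; δ) ≥ 4 √(δ(θ² + log(T/δ)))) ≤ 8 exp(-θ²)`. -/
theorem brownian_modulus_tail {Ω : Type*} [MeasurableSpace Ω]
    (P : Measure Ω) [IsProbabilityMeasure P]
    (W : ℝ → Ω → ℝ) (hW : IsBrownianMotion P W)
    (T δ θ : ℝ) (hδ : 0 < δ) (hδT : δ ≤ T) (hθ : 0 < θ) :
    (P {ω | 4 * Real.sqrt (δ * (θ ^ 2 + Real.log (T / δ))) ≤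
        modulus (fun t => W t ω) T δ}).toReal ≤ 8 * Real.exp (-θ ^ 2) := by
  classical
  obtain ⟨hcont, hzero, hmeas, hlaw, hindep⟩ := hW
  by_cases htriv : 1 ≤ 8 * Real.exp (-θ ^ 2)
  · calc (P _).toReal ≤ (1 : ℝ≥0∞).toReal :=
        ENNReal.toReal_mono ENNReal.one_ne_top prob_le_one
      _ = 1 := ENNReal.toReal_one
      _ ≤ 8 * Real.exp (-θ ^ 2) := htriv
  push_neg at htriv
  have hT : 0 < T := lt_of_lt_of_le hδ hδT
  have hTδ1 : 1 ≤ T / δ := (one_le_div hδ).2 hδT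
  have hTδpos : 0 < T / δ := lt_of_lt_of_le one_pos hTδ1
  have hlogTδ : 0 ≤ Real.log (T / δ) := Real.log_nonneg hTδ1
  set β : ℝ := θ ^ 2 + Real.log (T / δ) with hβdef
  have hlog8 : Real.log 8 < θ ^ 2 := by
    have h1 : Real.exp (-θ ^ 2) < 1 / 8 := by linarith
    have h2 : -θ ^ 2 < Real.log (1 / 8) :=
      (Real.lt_log_iff_exp_lt (by norm_num)).2 h1
    rw [Real.log_div one_ne_zero (by norm_num), Real.log_one] at h2
    linarith
  have hlog2_lt : Real.log 2 < β := by
    have h28 : Real.log 2 < Real.log 8 := Real.log_lt_log (by norm_num) (by norm_num)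
    have : Real.log 8 < β := by rw [hβdef]; linarith
    linarith
  have hlog2pos : (0:ℝ) < Real.log 2 := Real.log_pos (by norm_num)
  have hβpos : 0 < β := lt_trans hlog2pos hlog2_lt
  set a' : ℝ := 2 * Real.sqrt (δ * (β - Real.log 2)) with ha'def
  have hz : 0 < δ * (β - Real.log 2) := mul_pos hδ (by linarith)
  have ha'pos : 0 < a' := by
    rw [ha'def]; positivity
  have hA' : 2 * a' < 4 * Real.sqrt (δ * β) := by
    rw [ha'def]
    have : Real.sqrt (δ * (β - Real.log 2)) < Real.sqrt (δ * β) := by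
      apply Real.sqrt_lt_sqrt hz.le
      nlinarith
    linarith
  set N : ℕ := ⌈T / δ⌉₊ with hNdef
  set B : ℕ → ℝ → Set Ω := fun i ε =>
    {ω | ∃ q : ℚ, (i : ℝ) * δ ≤ (q : ℝ) ∧ (q : ℝ) ≤ (i : ℝ) * δ + 2 * δ ∧
      a' < ε * (W q ω - W ((i : ℝ) * δ) ω)} with hBdef
  -- event inclusion
  have hincl : {ω | 4 * Real.sqrt (δ * (θ ^ 2 + Real.log (T / δ))) ≤
      modulus (fun t => W t ω) T δ} ⊆ ⋃ i ∈ Finset.range N, (B i 1 ∪ B i (-1)) := by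
    intro ω hω
    simp only [Set.mem_setOf_eq] at hω
    set x : ℝ → ℝ := fun t => W t ω with hx
    have hxc : Continuous x := hcont ω
    have hne : {d : ℝ | ∃ r s : ℝ, 0 ≤ r ∧ r ≤ s ∧ s ≤ T ∧ s - r ≤ δ ∧
        d = |x s - x r|}.Nonempty :=
      ⟨|x 0 - x 0|, 0, 0, le_rfl, le_rfl, by linarith, by linarith, rfl⟩
    have hlt : 2 * a' < modulus x T δ := lt_of_lt_of_le hA' hω
    obtain ⟨d, hd, hdgt⟩ := exists_lt_of_lt_csSup hne hlt
    obtain ⟨r, s, h0r, hrs, hsT, hsrδ, rfl⟩ := hd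
    have hd0 : 0 < |x s - x r| := lt_trans (by positivity) hdgt
    have hrls : r < s := by
      rcases eq_or_lt_of_le hrs with rfl | h
      · simp at hd0
      · exact h
    have hrT : r < T := lt_of_lt_of_le hrls hsT
    set i : ℕ := ⌊r / δ⌋₊ with hidef
    set cc : ℝ := (i : ℝ) * δ with hccdef
    have hfl : (i : ℝ) ≤ r / δ := Nat.floor_le (div_nonneg h0r hδ.le)
    have hcr : cc ≤ r := by
      rw [hccdef]
      calc (i : ℝ) * δ ≤ (r / δ) * δ := mul_le_mul_of_nonneg_right hfl hδ.le
        _ = r := div_mul_cancel₀ r hδ.ne'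
    have hrc : r < cc + δ := by
      have h1 : r / δ < (i : ℝ) + 1 := Nat.lt_floor_add_one _
      have h2 : r < ((i : ℝ) + 1) * δ := by
        calc r = (r / δ) * δ := (div_mul_cancel₀ r hδ.ne').symm
          _ < ((i : ℝ) + 1) * δ := mul_lt_mul_of_pos_right h1 hδ
      rw [hccdef]; linarith
    have hs1 : s ≤ cc + 2 * δ := by linarith
    have hs0 : cc ≤ s := le_trans hcr hrs
    have hiN : i < N := by
      have h2 : r / δ < T / δ := by gcongr
      have h3 : (T / δ) ≤ (N : ℝ) := Nat.le_ceil _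
      have : (i : ℝ) < (N : ℝ) := lt_of_le_of_lt hfl (lt_of_lt_of_le h2 h3)
      exact_mod_cast this
    have htri : |x s - x r| ≤ |x s - x cc| + |x r - x cc| := by
      calc |x s - x r| = |(x s - x cc) - (x r - x cc)| := by ring_nf
        _ ≤ |x s - x cc| + |x r - x cc| := abs_sub _ _
    have hp : ∃ p, cc ≤ p ∧ p ≤ cc + 2 * δ ∧ a' < |x p - x cc| := by
      by_cases h : a' < |x s - x cc|
      · exact ⟨s, hs0, hs1, h⟩
      · push_neg at h
        exact ⟨r, hcr, by linarith, by linarith⟩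
    obtain ⟨p, hp0, hp1, hpgt⟩ := hp
    have hopen : IsOpen {t : ℝ | a' < |x t - x cc|} :=
      isOpen_lt continuous_const ((hxc.sub continuous_const).abs)
    obtain ⟨η, hηpos, hball⟩ := Metric.isOpen_iff.1 hopen p hpgt
    have hlohi : max cc (p - η) < min (cc + 2 * δ) (p + η) := by
      apply max_lt <;> apply lt_min <;> linarith
    obtain ⟨q, hq1, hq2⟩ := exists_rat_btwn hlohi
    have hqlo : cc ≤ (q : ℝ) := le_trans (le_max_left _ _) hq1.le
    have hqhi : (q : ℝ) ≤ cc + 2 * δ := le_trans hq2.le (min_le_left _ _)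
    have hqball : (q : ℝ) ∈ Metric.ball p η := by
      rw [Metric.mem_ball, Real.dist_eq, abs_lt]
      constructor
      · have := le_max_right cc (p - η); linarith
      · have := min_le_right (cc + 2 * δ) (p + η); linarith
    have hqgt : a' < |x q - x cc| := hball hqball
    rcases lt_abs.1 hqgt with hql | hqr
    · exact Set.mem_biUnion (Finset.mem_range.2 hiN)
        (Set.mem_union_left _ (⟨q, hqlo, hqhi, by rw [one_mul]; exact hql⟩ :
          ω ∈ B i 1))
    · exact Set.mem_biUnion (Finset.mem_range.2 hiN)
        (Set.mem_union_right _ (⟨q, hqlo, hqhi, by rw [neg_one_mul]; exact hqr⟩ :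
          ω ∈ B i (-1)))
  -- measure bound
  set κ : ℝ := Real.exp (-(a' ^ 2) / (2 * (2 * δ))) with hκdef
  have hκpos : 0 < κ := Real.exp_pos _
  have hwin : ∀ i ε, ε = 1 ∨ ε = -1 → P (B i ε) ≤ ENNReal.ofReal κ := by
    intro i ε hε
    exact window_bound P W hmeas hlaw hindep ((i : ℝ) * δ) δ a'
      (mul_nonneg (Nat.cast_nonneg i) hδ.le) hδ ha'pos ε hε
  have hPE : P {ω | 4 * Real.sqrt (δ * (θ ^ 2 + Real.log (T / δ))) ≤
      modulus (fun t => W t ω) T δ} ≤ (N : ℝ≥0∞) * ENNReal.ofReal (2 * κ) := by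
    calc P _ ≤ P (⋃ i ∈ Finset.range N, (B i 1 ∪ B i (-1))) := measure_mono hincl
      _ ≤ ∑ i ∈ Finset.range N, P (B i 1 ∪ B i (-1)) := measure_biUnion_finset_le _ _
      _ ≤ ∑ _i ∈ Finset.range N, ENNReal.ofReal (2 * κ) := by
          apply Finset.sum_le_sum
          intro i _
          calc P (B i 1 ∪ B i (-1)) ≤ P (B i 1) + P (B i (-1)) := measure_union_le _ _
            _ ≤ ENNReal.ofReal κ + ENNReal.ofReal κ :=
                add_le_add (hwin i 1 (Or.inl rfl)) (hwin i (-1) (Or.inr rfl))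
            _ = ENNReal.ofReal (2 * κ) := by
                rw [← ENNReal.ofReal_add hκpos.le hκpos.le]; ring_nf
      _ = (N : ℝ≥0∞) * ENNReal.ofReal (2 * κ) := by
          rw [Finset.sum_const, Finset.card_range, nsmul_eq_mul]
  have hmain : (N : ℝ≥0∞) * ENNReal.ofReal (2 * κ) ≤ ENNReal.ofReal (8 * Real.exp (-θ ^ 2)) := by
    rw [show ((N : ℝ≥0∞)) = ENNReal.ofReal ((N : ℝ)) by
        rw [ENNReal.ofReal_natCast],
      ← ENNReal.ofReal_mul (Nat.cast_nonneg N)]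
    apply ENNReal.ofReal_le_ofReal
    -- numeric part
    have hκval : κ = 2 * (Real.exp (-θ ^ 2) * (δ / T)) := by
      rw [hκdef]
      have ha'sq : a' ^ 2 = 4 * (δ * (β - Real.log 2)) := by
        rw [ha'def, mul_pow, Real.sq_sqrt hz.le]; norm_num
      have hexp : -(a' ^ 2) / (2 * (2 * δ)) = Real.log 2 + (-θ ^ 2 + -Real.log (T / δ)) := by
        rw [ha'sq, hβdef]
        field_simp
        ring
      rw [hexp, Real.exp_add, Real.exp_add, Real.exp_log (by norm_num : (0:ℝ) < 2)]
      have : Real.exp (-Real.log (T / δ)) = δ / T := by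
        rw [Real.exp_neg, Real.exp_log hTδpos]
        rw [inv_div]
      rw [this]
    have hN2 : (N : ℝ) ≤ 2 * (T / δ) := by
      have h1 : (N : ℝ) < T / δ + 1 := Nat.ceil_lt_add_one (le_of_lt hTδpos)
      linarith
    have hδT' : 0 < δ / T := div_pos hδ hT
    have h2 : (N : ℝ) * (δ / T) ≤ 2 := by
      calc (N : ℝ) * (δ / T) ≤ (2 * (T / δ)) * (δ / T) :=
            mul_le_mul_of_nonneg_right hN2 hδT'.le
        _ = 2 := by field_simp
    calc (N : ℝ) * (2 * κ) = ((N : ℝ) * (δ / T)) * (4 * Real.exp (-θ ^ 2)) := by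
          rw [hκval]; ring
      _ ≤ 2 * (4 * Real.exp (-θ ^ 2)) :=
          mul_le_mul_of_nonneg_right h2 (by positivity)
      _ = 8 * Real.exp (-θ ^ 2) := by ring
  exact ENNReal.toReal_le_of_le_ofReal (by positivity) (le_trans hPE hmain)
end

section
/- For any continuous function x : [0,∞) → ℝ, the pair (ψ, φ) with ψ = Γx given by ψ(t) = x(t) − min_{s∈[0,t]}(x(s) ∧ 0) and φ(t) = −min_{s∈[0,t]}(x(s) ∧ 0) solves the Skorokhod problem on [0,∞): ψ(t) ≥ 0 for all t, φ is non-decreasing and continuous with φ(0) = 0, ψ(t) = x(t) + φ(t), and φ increases only when ψ = 0, i.e., ∫₀ᵗ 1_{{ψ(s) > 0}} dφ(s) = 0 for all t. -/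
open Set

/-- The Skorokhod map on the half-line: `(Γx)(t) = x(t) - min_{s ∈ [0,t]} (x(s) ∧ 0)`. -/
noncomputable def skorokhod (x : ℝ → ℝ) (t : ℝ) : ℝ :=
  x t - sInf ((fun s => min (x s) 0) '' Icc 0 t)

/-- The regulator term of the Skorokhod map: `φ(t) = - min_{s ∈ [0,t]} (x(s) ∧ 0)`. -/
noncomputable def skorokhodRegulator (x : ℝ → ℝ) (t : ℝ) : ℝ :=
  -sInf ((fun s => min (x s) 0) '' Icc 0 t)

/-- The pair `(ψ, φ) = (Γx, -min_{[0,·]}(x ∧ 0))` solves the Skorokhod problem on `[0,∞)`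
for a continuous input `x` with `x(0) ≥ 0`: `ψ ≥ 0`; `φ` is non-decreasing, continuous and
starts at `0`; `ψ = x + φ`; and `φ` increases only when `ψ = 0`, i.e. `φ` is constant on
every interval where `ψ` stays positive (so the Stieltjes measure `dφ` is supported on
`{ψ = 0}` and `∫₀ᵗ 1_{ψ > 0} dφ = 0`). -/
theorem skorokhod_solves_skorokhod_problem (x : ℝ → ℝ) (hx : Continuous x)
    (hx0 : 0 ≤ x 0) :
    (∀ t : ℝ, 0 ≤ t → 0 ≤ skorokhod x t) ∧
    (MonotoneOn (skorokhodRegulator x) (Ici 0) ∧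
      ContinuousOn (skorokhodRegulator x) (Ici 0) ∧ skorokhodRegulator x 0 = 0) ∧
    (∀ t : ℝ, 0 ≤ t → skorokhod x t = x t + skorokhodRegulator x t) ∧
    (∀ s t : ℝ, 0 ≤ s → s ≤ t → (∀ r ∈ Icc s t, 0 < skorokhod x r) →
      skorokhodRegulator x s = skorokhodRegulator x t) := by
  set g : ℝ → ℝ := fun s => min (x s) 0 with hgdef
  have hgc : Continuous g := hx.min continuous_const
  set m : ℝ → ℝ := fun t => sInf (g '' Icc 0 t) with hmdef
  have hne : ∀ t : ℝ, 0 ≤ t → (g '' Icc 0 t).Nonempty :=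
    fun t ht => (nonempty_Icc.2 ht).image g
  have hbdd : ∀ t : ℝ, BddBelow (g '' Icc 0 t) :=
    fun t => (isCompact_Icc.image hgc).bddBelow
  have hle : ∀ t : ℝ, ∀ s ∈ Icc (0:ℝ) t, m s ≤ g s → m t ≤ g s := by
    intro t s hs _
    exact csInf_le (hbdd t) ⟨s, hs, rfl⟩
  have hle' : ∀ t : ℝ, ∀ s ∈ Icc (0:ℝ) t, m t ≤ g s :=
    fun t s hs => csInf_le (hbdd t) ⟨s, hs, rfl⟩
  have hmono : ∀ s t : ℝ, 0 ≤ s → s ≤ t → m t ≤ m s :=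
    fun s t hs hst => csInf_le_csInf (hbdd t) (hne s hs)
      (image_mono (Icc_subset_Icc le_rfl hst))
  -- attained minimum
  have hattain : ∀ t : ℝ, 0 ≤ t → ∃ r ∈ Icc (0:ℝ) t, m t = g r ∧ ∀ s ∈ Icc (0:ℝ) t, g r ≤ g s := by
    intro t ht
    obtain ⟨r, hr, hrmin⟩ := isCompact_Icc.exists_isMinOn (nonempty_Icc.2 ht) hgc.continuousOn
    refine ⟨r, hr, le_antisymm (hle' t r hr) (le_csInf (hne t ht) ?_), fun s hs => hrmin hs⟩
    rintro y ⟨s, hs, rfl⟩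
    exact hrmin hs
  have hpsi : ∀ t : ℝ, skorokhod x t = x t - m t := fun t => rfl
  have hphi : ∀ t : ℝ, skorokhodRegulator x t = -m t := fun t => rfl
  refine ⟨?_, ⟨?_, ?_, ?_⟩, ?_, ?_⟩
  · -- nonnegativity
    intro t ht
    rw [hpsi, sub_nonneg]
    exact (hle' t t ⟨ht, le_rfl⟩).trans (min_le_left _ _)
  · -- monotone
    intro s hs t ht hst
    rw [hphi, hphi, neg_le_neg_iff]
    exact hmono s t hs hst
  · -- continuity
    intro t₀ ht₀
    have hphieq : ∀ t : ℝ, skorokhodRegulator x t = -m t := hphi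
    rw [Metric.continuousWithinAt_iff]
    intro ε hε
    obtain ⟨δ, hδ, hδc⟩ := Metric.continuousAt_iff.1 hgc.continuousAt (ε / 3) (by linarith)
    refine ⟨δ, hδ, ?_⟩
    intro t ht hdist
    have key1 : m t₀ - ε / 3 ≤ m t := by
      refine le_csInf (hne t ht) ?_
      rintro y ⟨s, hs, rfl⟩
      rcases le_or_gt s t₀ with h | h
      · have := hle' t₀ s ⟨hs.1, h⟩
        linarith
      · have hsd : dist s t₀ < δ := by
          rw [Real.dist_eq] at hdist ⊢
          rw [abs_of_pos (by linarith [hs.2])]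
          rcases abs_lt.1 hdist with ⟨h1, h2⟩
          linarith [hs.2]
        have hd := hδc hsd
        rw [Real.dist_eq] at hd
        have := abs_lt.1 hd
        have h2 := hle' t₀ t₀ ⟨ht₀, le_rfl⟩
        linarith [this.1]
    have key2 : m t ≤ m t₀ + 2 * (ε / 3) := by
      rcases le_or_gt t₀ t with h | h
      · linarith [hmono t₀ t ht₀ h]
      · obtain ⟨r, hr, hrm, hrmin⟩ := hattain t₀ ht₀
        rcases le_or_gt r t with h2 | h2
        · have := hle' t r ⟨hr.1, h2⟩
          linarith
        · have hrd : dist r t₀ < δ := by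
            rw [Real.dist_eq] at hdist ⊢
            rw [abs_of_nonpos (by linarith [hr.2])]
            rcases abs_lt.1 hdist with ⟨h1, h3⟩
            linarith
          have hgr' := hδc hrd; rw [Real.dist_eq] at hgr'
          have hgr := abs_lt.1 hgr'
          have hgt' := hδc hdist; rw [Real.dist_eq] at hgt'
          have hgt := abs_lt.1 hgt'
          have := hle' t t ⟨ht, le_rfl⟩
          linarith [hgr.1, hgt.2]
    rw [hphieq, hphieq, Real.dist_eq]
    rw [abs_lt]
    constructor <;> linarith
  · -- phi 0 = 0
    rw [hphi]
    have : m 0 = g 0 := by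
      have h1 : Icc (0:ℝ) 0 = {0} := Icc_self 0
      simp [hmdef, h1]
    rw [this]
    simp [hgdef, min_eq_right hx0]
  · -- decomposition
    intro t ht
    rw [hpsi, hphi]; ring
  · -- flat off boundary
    intro s t hs hst hpos
    rw [hphi, hphi, neg_inj]
    by_contra hne'
    have hlt : m t < m s := lt_of_le_of_ne (hmono s t hs hst) (fun h => hne' h.symm)
    obtain ⟨r, hr, hrm, hrmin⟩ := hattain t (hs.trans hst)
    have hrs : s < r := by
      by_contra h
      push_neg at h
      have := hle' s r ⟨hr.1, h⟩
      rw [← hrm] at this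
      exact absurd this (not_le.2 hlt)
    have hψr := hpos r ⟨hrs.le, hr.2⟩
    rw [hpsi, sub_pos] at hψr
    -- ψ r = 0 : m r = x r
    have h1 : m r ≤ g r := hle' r r ⟨hr.1, le_rfl⟩
    have h2 : m t ≤ m r := hmono r t hr.1 hr.2
    have hgneg : g r < 0 := by
      have := hle' s s ⟨hs, le_rfl⟩
      calc g r = m t := hrm.symm
        _ < m s := hlt
        _ ≤ g s := hle' s s ⟨hs, le_rfl⟩
        _ ≤ 0 := min_le_right _ _
    have hgx : g r = x r := min_eq_left (by
      by_contra h
      push_neg at h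
      have : g r = 0 := min_eq_right h.le
      linarith)
    rw [← hrm] at h1
    rw [hgx] at hrm
    linarith
end
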